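/- Let α ≥ 2 be an integer and let I₁, …, I_α : [0,1] → ℝ² be Lipschitz arcs with I_j(0) = I_j(1) = 0 for every j, such that there is μ > 0 with ∫_0^1 |I_j(t) − I_k(t)| dt = μ for all j ≠ k. For an integer β with 2 ≤ β < α, let Ω*_β be the set of curves γ: ℝ → ℝ² such that there is a sequence (j_i)_{i∈ℤ} in {1,…,β} with γ(i+s) = I_{j_i}(s) for all i ∈ ℤ and s ∈ [0,1]. Then Ω*_β is invariant under the time-one shift F₁, and the topological entropy of F₁ restricted to (Ω*_β, ρ) equals log β. -/

import Mathlib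

open Filter

/-- The metric `ρ` on the space of curves `ℝ → M`. -/
noncomputable def rho {M : Type*} [PseudoMetricSpace M] (γ₁ γ₂ : ℝ → M) : ℝ :=
  ∑' i : ℤ, (2 : ℝ) ^ (-|i|) * ∫ t in (i : ℝ)..((i : ℝ) + 1), dist (γ₁ t) (γ₂ t)

/-- The time-one shift on curves: `F₁(γ)(t) = γ(t + 1)`. -/
def timeOneShift {M : Type*} (γ : ℝ → M) : ℝ → M := fun t => γ (t + 1)

/-- A curve `γ : ℝ → M` is `L`-Lipschitz. -/
def LipschitzCurve {M : Type*} [PseudoMetricSpace M] (L : ℝ) (γ : ℝ → M) : Prop :=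
  ∀ s t : ℝ, dist (γ s) (γ t) ≤ L * |s - t|

/-- `E` is an `(n, ε)`-dense subset of `F` for the map `f` and the distance `d`:
`E ⊆ F` and the dynamical balls `{y | d_n^f(x,y) < ε}`, `x ∈ E`, cover `F`. -/
def IsDynCover {X : Type*} (d : X → X → ℝ) (f : X → X) (F : Set X) (ε : ℝ) (n : ℕ)
    (E : Finset X) : Prop :=
  ↑E ⊆ F ∧ ∀ y ∈ F, ∃ x ∈ E, ∀ i < n, d (f^[i] x) (f^[i] y) < ε

/-- `S_d(f, ε, n)`: the minimal cardinality of an `(n, ε)`-dense subset of `F`. -/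
noncomputable def coverCard {X : Type*} (d : X → X → ℝ) (f : X → X) (F : Set X) (ε : ℝ)
    (n : ℕ) : ℕ∞ :=
  ⨅ (E : Finset X) (_ : IsDynCover d f F ε n E), (E.card : ℕ∞)

/-- The topological entropy of `f` on `F`, w.r.t. the distance `d`:
`h(f) = lim_{ε → 0⁺} limsup_{n → ∞} (1/n) log S_d(f, ε, n)`; since the inner rate is
antitone in `ε`, the limit is realized as the supremum over `ε > 0`. -/
noncomputable def topEntropy {X : Type*} (d : X → X → ℝ) (f : X → X) (F : Set X) : EReal :=
  ⨆ (ε : ℝ) (_ : (0 : ℝ) < ε),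
    atTop.limsup fun n : ℕ => ENNReal.log (coverCard d f F ε n) / (n : EReal)

/-- The plane `ℝ²` with the Euclidean distance. -/
abbrev Plane := EuclideanSpace ℝ (Fin 2)

/-- The set `Ω*` of curves obtained by concatenating the arcs `I j`, `j ∈ {1,…,α}`:
`γ ∈ Ω*` iff there is a sequence `(j_i)_{i ∈ ℤ}` with `γ(i + s) = I_{j_i}(s)` for all
`i ∈ ℤ` and `s ∈ [0,1]`. -/
def arcConcatenations {α : ℕ} (I : Fin α → ℝ → Plane) : Set (ℝ → Plane) :=
  {γ | ∃ js : ℤ → Fin α, ∀ i : ℤ, ∀ s ∈ Set.Icc (0 : ℝ) 1, γ ((i : ℝ) + s) = I (js i) s}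

/-- The set `Ω*_β` of curves obtained by concatenating only the first `β` arcs among
`I j`, `j ∈ {1,…,α}`. -/
def arcConcatenationsRestricted {α : ℕ} (I : Fin α → ℝ → Plane) (β : ℕ) : Set (ℝ → Plane) :=
  {γ | ∃ js : ℤ → Fin α, (∀ i, (js i : ℕ) < β) ∧
    ∀ i : ℤ, ∀ s ∈ Set.Icc (0 : ℝ) 1, γ ((i : ℝ) + s) = I (js i) s}


namespace EntropyAux

variable {α : ℕ} {I : Fin α → ℝ → Plane} {C : ℝ}

/-- `γ` is coded by the symbol sequence `js`. -/
def Codes (I : Fin α → ℝ → Plane) (γ : ℝ → Plane) (js : ℤ → Fin α) : Prop :=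
  ∀ i : ℤ, ∀ s ∈ Set.Icc (0:ℝ) 1, γ ((i:ℝ) + s) = I (js i) s

lemma shift_iter (γ : ℝ → Plane) (k : ℕ) :
    timeOneShift^[k] γ = fun t => γ (t + k) := by
  induction k with
  | zero => simp
  | succ n ih =>
    rw [Function.iterate_succ_apply', ih]
    funext t
    show γ (t + 1 + (n:ℝ)) = γ (t + ((n:ℕ)+1 : ℕ))
    congr 1
    push_cast
    ring

lemma Codes.shift {γ : ℝ → Plane} {js : ℤ → Fin α} (h : Codes I γ js) (k : ℕ) :
    Codes I (timeOneShift^[k] γ) (fun i => js (i + k)) := by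
  intro i s hs
  rw [shift_iter]
  show γ ((i:ℝ) + s + (k:ℕ)) = I (js (i + k)) s
  have : (i:ℝ) + s + (k:ℕ) = ((i + (k:ℤ) : ℤ) : ℝ) + s := by push_cast; ring
  rw [this, h (i + k) s hs]

lemma Codes.eq_on {γ : ℝ → Plane} {js : ℤ → Fin α} (h : Codes I γ js) (i : ℤ)
    {t : ℝ} (ht : t ∈ Set.Icc (i:ℝ) ((i:ℝ)+1)) : γ t = I (js i) (t - i) := by
  have := h i (t - i) ⟨by linarith [ht.1], by linarith [ht.2]⟩
  rwa [show (i:ℝ) + (t - i) = t by ring] at this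

lemma Codes.continuousOn {γ : ℝ → Plane} {js : ℤ → Fin α} (h : Codes I γ js)
    (hcont : ∀ j, ContinuousOn (I j) (Set.Icc 0 1)) (i : ℤ) :
    ContinuousOn γ (Set.Icc (i:ℝ) ((i:ℝ)+1)) := by
  have : ContinuousOn (fun t => I (js i) (t - i)) (Set.Icc (i:ℝ) ((i:ℝ)+1)) := by
    apply (hcont (js i)).comp (by fun_prop)
    intro t ht
    exact ⟨by simp; linarith [ht.1], by simp; linarith [ht.2]⟩
  exact this.congr fun t ht => h.eq_on i ht

lemma Codes.norm_le {γ : ℝ → Plane} {js : ℤ → Fin α} (h : Codes I γ js)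
    (hC : ∀ j, ∀ s ∈ Set.Icc (0:ℝ) 1, ‖I j s‖ ≤ C) (i : ℤ)
    {t : ℝ} (ht : t ∈ Set.Icc (i:ℝ) ((i:ℝ)+1)) : ‖γ t‖ ≤ C := by
  rw [h.eq_on i ht]
  exact hC _ _ ⟨by linarith [ht.1], by linarith [ht.2]⟩

end EntropyAux

namespace EntropyAux2
open EntropyAux MeasureTheory intervalIntegral

variable {α : ℕ} {I : Fin α → ℝ → Plane} {C : ℝ} {γ₁ γ₂ γ₃ : ℝ → Plane}
  {js₁ js₂ js₃ : ℤ → Fin α}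

/-- the `i`-th term of `rho`. -/
noncomputable def rterm (γ₁ γ₂ : ℝ → Plane) (i : ℤ) : ℝ :=
  (2 : ℝ) ^ (-|i|) * ∫ t in (i : ℝ)..((i : ℝ) + 1), dist (γ₁ t) (γ₂ t)

lemma rho_eq : rho γ₁ γ₂ = ∑' i : ℤ, rterm γ₁ γ₂ i := rfl

lemma summable_base (D : ℝ) : Summable (fun i : ℤ => (2:ℝ) ^ (-|i|) * D) := by
  apply Summable.mul_right
  apply Summable.of_nat_of_neg <;>
  · apply Summable.congr (summable_geometric_of_lt_one (r := (2:ℝ)⁻¹) (by norm_num) (by norm_num))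
    intro n
    simp [zpow_neg, ← inv_zpow]

section
variable (hcont : ∀ j, ContinuousOn (I j) (Set.Icc 0 1))
  (hC : ∀ j, ∀ s ∈ Set.Icc (0:ℝ) 1, ‖I j s‖ ≤ C)
  (h₁ : Codes I γ₁ js₁) (h₂ : Codes I γ₂ js₂) (h₃ : Codes I γ₃ js₃)

include hcont h₁ h₂ in
lemma intInt (i : ℤ) :
    IntervalIntegrable (fun t => dist (γ₁ t) (γ₂ t)) volume (i:ℝ) ((i:ℝ)+1) := by
  apply ContinuousOn.intervalIntegrable
  rw [Set.uIcc_of_le (by linarith)]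
  exact continuous_dist.comp_continuousOn ((h₁.continuousOn hcont i).prodMk (h₂.continuousOn hcont i))

include h₁ h₂ in
lemma integral_nonneg' (i : ℤ) :
    0 ≤ ∫ t in (i : ℝ)..((i : ℝ) + 1), dist (γ₁ t) (γ₂ t) :=
  intervalIntegral.integral_nonneg (by linarith) (fun t _ => dist_nonneg)

include hcont hC h₁ h₂ in
lemma integral_le (i : ℤ) :
    (∫ t in (i : ℝ)..((i : ℝ) + 1), dist (γ₁ t) (γ₂ t)) ≤ 2 * C := by
  have h2C : (∫ t in (i : ℝ)..((i : ℝ) + 1), (2*C : ℝ)) = 2*C := by simp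
  rw [← h2C]
  apply intervalIntegral.integral_mono_on (by linarith) (intInt hcont h₁ h₂ i)
    intervalIntegrable_const
  intro t ht
  calc dist (γ₁ t) (γ₂ t) ≤ ‖γ₁ t‖ + ‖γ₂ t‖ := dist_le_norm_add_norm _ _
  _ ≤ C + C := add_le_add (h₁.norm_le hC i ht) (h₂.norm_le hC i ht)
  _ = 2 * C := by ring

include h₁ h₂ in
lemma rterm_nonneg (i : ℤ) : 0 ≤ rterm γ₁ γ₂ i :=
  mul_nonneg (by positivity) (integral_nonneg' h₁ h₂ i)

include hcont hC h₁ h₂ in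
lemma rterm_le (i : ℤ) : rterm γ₁ γ₂ i ≤ (2:ℝ) ^ (-|i|) * (2 * C) :=
  mul_le_mul_of_nonneg_left (integral_le hcont hC h₁ h₂ i) (by positivity)

include hcont hC h₁ h₂ in
lemma summable_rterm : Summable (rterm γ₁ γ₂) :=
  Summable.of_nonneg_of_le (rterm_nonneg h₁ h₂) (rterm_le hcont hC h₁ h₂) (summable_base _)

include hcont hC h₁ h₂ h₃ in
lemma rho_triangle : rho γ₁ γ₃ ≤ rho γ₁ γ₂ + rho γ₂ γ₃ := by
  rw [rho_eq, rho_eq, rho_eq,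
    ← Summable.tsum_add (summable_rterm hcont hC h₁ h₂) (summable_rterm hcont hC h₂ h₃)]
  apply Summable.tsum_le_tsum _ (summable_rterm hcont hC h₁ h₃)
    ((summable_rterm hcont hC h₁ h₂).add (summable_rterm hcont hC h₂ h₃))
  intro i
  unfold rterm
  rw [← mul_add, ← intervalIntegral.integral_add (intInt hcont h₁ h₂ i) (intInt hcont h₂ h₃ i)]
  apply mul_le_mul_of_nonneg_left _ (by positivity)
  apply intervalIntegral.integral_mono_on (by linarith) (intInt hcont h₁ h₃ i)
    ((intInt hcont h₁ h₂ i).add (intInt hcont h₂ h₃ i))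
  exact fun t _ => dist_triangle _ _ _

include hcont hC h₁ h₂ in
lemma rho_lower :
    (∫ t in (0:ℝ)..1, dist (I (js₁ 0) t) (I (js₂ 0) t)) ≤ rho γ₁ γ₂ := by
  have key : rterm γ₁ γ₂ 0 = ∫ t in (0:ℝ)..1, dist (I (js₁ 0) t) (I (js₂ 0) t) := by
    unfold rterm
    simp only [abs_zero, neg_zero, zpow_zero, one_mul, Int.cast_zero, zero_add]
    apply intervalIntegral.integral_congr
    intro t ht
    rw [Set.uIcc_of_le (by norm_num : (0:ℝ) ≤ 1)] at ht
    have e₁ : γ₁ t = I (js₁ 0) t := by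
      have := h₁ 0 t ht; simpa using this
    have e₂ : γ₂ t = I (js₂ 0) t := by
      have := h₂ 0 t ht; simpa using this
    simp only [e₁, e₂]
  rw [← key, rho_eq]
  exact Summable.le_tsum (summable_rterm hcont hC h₁ h₂) 0 (fun j _ => rterm_nonneg h₁ h₂ j)

include hcont hC h₁ h₂ in
lemma rho_le_tail (s : Finset ℤ) (hagree : ∀ i ∈ s, js₁ i = js₂ i) :
    rho γ₁ γ₂ ≤ ∑' i : {x : ℤ // x ∉ s}, (2:ℝ) ^ (-|(i:ℤ)|) * (2 * C) := by
  rw [rho_eq]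
  have hsupp : Function.support (rterm γ₁ γ₂) ⊆ {x : ℤ | x ∉ s} := by
    intro i hi
    simp only [Set.mem_setOf_eq]
    intro his
    apply hi
    unfold rterm
    have : ∀ t ∈ Set.uIcc (i:ℝ) ((i:ℝ)+1), dist (γ₁ t) (γ₂ t) = (0:ℝ) := by
      intro t ht
      rw [Set.uIcc_of_le (by linarith)] at ht
      rw [h₁.eq_on i ht, h₂.eq_on i ht, hagree i his]
      simp
    rw [intervalIntegral.integral_congr this]
    simp
  rw [← tsum_subtype_eq_of_support_subset hsupp]
  apply Summable.tsum_le_tsum _ ((summable_rterm hcont hC h₁ h₂).subtype _)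
    ((summable_base (2*C)).subtype _)
  exact fun i => rterm_le hcont hC h₁ h₂ i

end

lemma rho_comm : rho γ₁ γ₂ = rho γ₂ γ₁ := by
  unfold rho
  congr 1
  funext i
  congr 1
  apply intervalIntegral.integral_congr
  intro t _
  exact dist_comm _ _

end EntropyAux2

namespace EntropyAux3
open EntropyAux EntropyAux2

variable {α : ℕ} {I : Fin α → ℝ → Plane}

/-- The curve obtained by concatenating the arcs according to `js`. -/
noncomputable def seqCurve (I : Fin α → ℝ → Plane) (js : ℤ → Fin α) : ℝ → Plane :=
  fun t => I (js ⌊t⌋) (t - ⌊t⌋)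

lemma seqCurve_codes (h0 : ∀ j, I j 0 = 0) (h1 : ∀ j, I j 1 = 0) (js : ℤ → Fin α) :
    Codes I (seqCurve I js) js := by
  intro i s hs
  show I (js ⌊(i:ℝ) + s⌋) (((i:ℝ) + s) - ⌊(i:ℝ) + s⌋) = I (js i) s
  rcases eq_or_lt_of_le hs.2 with h | h
  · have hfl : ⌊(i:ℝ) + s⌋ = i + 1 := by
      rw [Int.floor_eq_iff]
      constructor
      · push_cast; linarith [hs.1]
      · push_cast; linarith [hs.1]
    rw [hfl, h]
    push_cast
    rw [show (i:ℝ) + 1 - ((i:ℝ) + 1) = 0 by ring, h0, h1]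
  · have hfl : ⌊(i:ℝ) + s⌋ = i := by
      rw [Int.floor_eq_iff]
      constructor
      · linarith [hs.1]
      · push_cast; linarith
    rw [hfl, show (i:ℝ) + s - (i:ℝ) = s by ring]

lemma tail_exists {D ε : ℝ} (hε : 0 < ε) :
    ∃ m : ℕ, ∑' i : {x : ℤ // x ∉ Finset.Icc (-(m:ℤ)) (m:ℤ)}, (2:ℝ) ^ (-|(i:ℤ)|) * D < ε := by
  have h0 := tendsto_tsum_compl_atTop_zero (fun i : ℤ => (2:ℝ) ^ (-|i|) * D)
  have hT : Filter.Tendsto (fun m : ℕ => Finset.Icc (-(m:ℤ)) (m:ℤ)) Filter.atTop Filter.atTop := by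
    apply tendsto_atTop_finset_of_monotone
    · intro a b hab
      apply Finset.Icc_subset_Icc <;> · simp; omega
    · intro x
      exact ⟨x.natAbs, by simp only [Finset.mem_Icc]; omega⟩
  exact ((h0.comp hT).eventually_lt_const hε).exists

end EntropyAux3


/-- Restricting the concatenation space to `β` of the `α` arcs
(`2 ≤ β < α`) yields a set `Ω*_β` invariant under the time-one shift `F₁`, on which the
topological entropy of `F₁` equals `log β`. -/
theorem entropy_arcConcatenations_restricted {α : ℕ} (hα : 2 ≤ α) (I : Fin α → ℝ → Plane)
    (hlip : ∀ j, ∃ L : NNReal, LipschitzOnWith L (I j) (Set.Icc 0 1))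
    (h0 : ∀ j, I j 0 = 0) (h1 : ∀ j, I j 1 = 0)
    (μ : ℝ) (hμ : 0 < μ)
    (hsep : ∀ j k, j ≠ k → (∫ t in (0 : ℝ)..1, dist (I j t) (I k t)) = μ)
    (β : ℕ) (hβ : 2 ≤ β) (hβα : β < α) :
    (∀ γ ∈ arcConcatenationsRestricted I β,
      timeOneShift γ ∈ arcConcatenationsRestricted I β) ∧
    topEntropy rho timeOneShift (arcConcatenationsRestricted I β) = (Real.log β : EReal) := by
  classical
  open EntropyAux EntropyAux2 EntropyAux3 in
  set F := arcConcatenationsRestricted I β with hFdef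
  have hcont : ∀ j, ContinuousOn (I j) (Set.Icc 0 1) :=
    fun j => ((hlip j).choose_spec).continuousOn
  obtain ⟨C, hC0, hC⟩ : ∃ C : ℝ, 0 ≤ C ∧ ∀ j, ∀ s ∈ Set.Icc (0:ℝ) 1, ‖I j s‖ ≤ C := by
    refine ⟨((Finset.univ.sup fun j => (hlip j).choose : NNReal) : ℝ),
      NNReal.coe_nonneg _, ?_⟩
    intro j s hs
    have h01 : (0:ℝ) ∈ Set.Icc (0:ℝ) 1 := by norm_num
    have := ((hlip j).choose_spec).dist_le_mul s hs 0 h01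
    rw [h0 j] at this
    rw [← dist_zero_right]
    calc dist (I j s) 0 ≤ (hlip j).choose * dist s 0 := this
    _ ≤ (hlip j).choose * 1 := by
        apply mul_le_mul_of_nonneg_left _ (NNReal.coe_nonneg _)
        rw [Real.dist_eq]
        simp [abs_of_nonneg hs.1, hs.2]
    _ = (hlip j).choose := mul_one _
    _ ≤ _ := by
        exact_mod_cast Finset.le_sup (f := fun j => (hlip j).choose) (Finset.mem_univ j)
  have hβα' : β ≤ α := le_of_lt hβα
  have hβpos : 0 < β := by omega
  -- membership of concatenated curves
  have memF : ∀ js : ℤ → Fin α, (∀ i, ((js i : ℕ) < β)) →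
      EntropyAux3.seqCurve I js ∈ F := by
    intro js hjs
    exact ⟨js, hjs, EntropyAux3.seqCurve_codes h0 h1 js⟩
  -- members of F are coded
  have codesF : ∀ γ ∈ F, ∃ js : ℤ → Fin α, (∀ i, ((js i : ℕ) < β)) ∧
      EntropyAux.Codes I γ js := fun γ hγ => hγ
  -- Part 1: invariance
  have inv : ∀ γ ∈ F, timeOneShift γ ∈ F := by
    rintro γ ⟨js, hjs, hγ⟩
    refine ⟨fun i => js (i + 1), fun i => hjs _, ?_⟩
    intro i s hs
    show γ ((i:ℝ) + s + 1) = _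
    rw [show (i:ℝ) + s + 1 = ((i + 1 : ℤ) : ℝ) + s by push_cast; ring]
    exact hγ (i + 1) s hs
  refine ⟨inv, ?_⟩
  -- Part 2: entropy
  have upper : ∀ ε : ℝ, 0 < ε →
      (Filter.atTop.limsup fun n : ℕ =>
        ENNReal.log (coverCard rho timeOneShift F ε n) / (n : EReal))
        ≤ (Real.log β : EReal) := by
    intro ε hε
    obtain ⟨m, hm⟩ := EntropyAux3.tail_exists (D := 2*C) hε
    have hcover : ∀ n : ℕ, coverCard rho timeOneShift F ε n ≤ ((β ^ (n + 2*m + 1) : ℕ) : ℕ∞) := by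
      intro n
      set s₀ : Finset ℤ := Finset.Icc (-(m:ℤ)) ((m:ℤ) + n) with hs₀
      set ext : ({x // x ∈ s₀} → Fin β) → ℤ → Fin α := fun w i =>
        if h : i ∈ s₀ then Fin.castLE hβα' (w ⟨i, h⟩) else Fin.castLE hβα' ⟨0, hβpos⟩ with hext
      have hextβ : ∀ w i, ((ext w i : ℕ) < β) := by
        intro w i
        simp only [hext]
        split
        · simp only [Fin.coe_castLE]; exact (w _).2
        · simp only [Fin.coe_castLE]; exact hβpos
      set E : Finset (ℝ → Plane) :=
        Finset.image (fun w : {x // x ∈ s₀} → Fin β => EntropyAux3.seqCurve I (ext w))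
          Finset.univ with hE
      have hdyn : IsDynCover rho timeOneShift F ε n E := by
        constructor
        · intro γ hγ
          simp only [hE, Finset.coe_image, Set.mem_image] at hγ
          obtain ⟨w, _, rfl⟩ := hγ
          exact memF _ (hextβ w)
        · intro y hy
          obtain ⟨jsy, hyβ, hy'⟩ := codesF y hy
          set w : {x // x ∈ s₀} → Fin β := fun x => ⟨(jsy x).val, hyβ _⟩ with hw
          refine ⟨EntropyAux3.seqCurve I (ext w),
            Finset.mem_image_of_mem _ (Finset.mem_univ w), ?_⟩
          intro k hk
          have hxsh := (EntropyAux3.seqCurve_codes h0 h1 (ext w)).shift k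
          have hysh := hy'.shift k
          refine lt_of_le_of_lt (EntropyAux2.rho_le_tail hcont hC hxsh hysh
            (Finset.Icc (-(m:ℤ)) (m:ℤ)) ?_) hm
          intro i hi
          simp only [Finset.mem_Icc] at hi
          have hkn : (k:ℤ) < (n:ℤ) := by exact_mod_cast hk
          have hmem : i + (k:ℕ) ∈ s₀ := by
            simp only [hs₀, Finset.mem_Icc]
            omega
          show ext w (i + (k:ℕ)) = jsy (i + (k:ℕ))
          simp only [hext, dif_pos hmem]
          apply Fin.ext
          simp [hw]
      have hcc : coverCard rho timeOneShift F ε n ≤ (E.card : ℕ∞) := iInf₂_le E hdyn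
      have hscard : s₀.card = n + 2*m + 1 := by
        rw [hs₀, Int.card_Icc]
        omega
      have hcard : E.card ≤ β ^ (n + 2*m + 1) := by
        have hci := Finset.card_image_le (s := (Finset.univ : Finset ({x // x ∈ s₀} → Fin β)))
          (f := fun w => EntropyAux3.seqCurve I (ext w))
        rw [Finset.card_univ, Fintype.card_fun, Fintype.card_coe, Fintype.card_fin, hscard] at hci
        exact hci
      exact hcc.trans (by exact_mod_cast hcard)
    have hlog : ∀ n : ℕ, ENNReal.log (coverCard rho timeOneShift F ε n)
        ≤ ((((n + 2*m + 1 : ℕ) : ℝ) * Real.log β : ℝ) : EReal) := by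
      intro n
      have h1' : ((coverCard rho timeOneShift F ε n : ℕ∞) : ENNReal)
          ≤ ((β : ENNReal)) ^ (n + 2*m + 1) := by
        have := hcover n
        exact_mod_cast this
      calc ENNReal.log _ ≤ ENNReal.log ((β : ENNReal) ^ (n + 2*m + 1)) :=
            ENNReal.log_monotone h1'
      _ = (((n + 2*m + 1 : ℕ)) : EReal) * ENNReal.log (β : ENNReal) := ENNReal.log_pow
      _ = _ := by
          rw [ENNReal.log, if_neg (by exact_mod_cast Nat.one_le_iff_ne_zero.mp (by omega : 1 ≤ β)),
            if_neg (by simp), EReal.coe_mul]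
          norm_cast
    set r : ℕ → ℝ := fun n => (((n + 2*m + 1 : ℕ) : ℝ) * Real.log β) / n with hr
    have hrt : Filter.Tendsto r Filter.atTop (nhds (Real.log β)) := by
      have hc : ∀ᶠ n : ℕ in Filter.atTop,
          Real.log β + (((2*m+1 : ℕ) : ℝ) * Real.log β) / n = r n := by
        filter_upwards [Filter.eventually_gt_atTop 0] with n hn
        have hn' : (n:ℝ) ≠ 0 := by positivity
        field_simp [hr]
        simp only [hr]
        push_cast
        field_simp
        ring
      apply Filter.Tendsto.congr' hc
      have h2 := tendsto_const_div_atTop_nhds_zero_nat (((2*m+1 : ℕ) : ℝ) * Real.log β)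
      simpa using tendsto_const_nhds.add h2
    have hle : ∀ᶠ n : ℕ in Filter.atTop,
        ENNReal.log (coverCard rho timeOneShift F ε n) / (n : EReal) ≤ ((r n : ℝ) : EReal) := by
      filter_upwards [Filter.eventually_gt_atTop 0] with n hn
      have hstep : ENNReal.log (coverCard rho timeOneShift F ε n) / (n : EReal)
          ≤ ((((n + 2*m + 1 : ℕ) : ℝ) * Real.log β : ℝ) : EReal) / (n : EReal) :=
        EReal.div_le_div_right_of_nonneg (by exact_mod_cast Nat.zero_le n) (hlog n)
      apply hstep.trans_eq
      rw [show ((n:ℕ) : EReal) = (((n:ℕ) : ℝ) : EReal) by norm_cast, ← EReal.coe_div]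
    calc Filter.atTop.limsup (fun n : ℕ =>
          ENNReal.log (coverCard rho timeOneShift F ε n) / (n : EReal))
        ≤ Filter.atTop.limsup (fun n : ℕ => ((r n : ℝ) : EReal)) :=
          Filter.limsup_le_limsup hle
    _ = (Real.log β : EReal) := (EReal.tendsto_coe.mpr hrt).limsup_eq

  have lower : (Real.log β : EReal) ≤
      Filter.atTop.limsup fun n : ℕ =>
        ENNReal.log (coverCard rho timeOneShift F (μ/2) n) / (n : EReal) := by
    have hcard : ∀ n : ℕ, ((β ^ n : ℕ) : ℕ∞) ≤ coverCard rho timeOneShift F (μ/2) n := by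
      intro n
      refine le_iInf fun E => le_iInf fun hEd => ?_
      have key : β ^ n ≤ E.card := by
        set emb : Fin β → Fin α := Fin.castLE hβα' with hemb
        set jsw : (Fin n → Fin β) → ℤ → Fin α := fun w i =>
          if h : 0 ≤ i ∧ i < n then emb (w ⟨i.toNat, by omega⟩) else emb ⟨0, hβpos⟩ with hjsw
        have hjβ : ∀ w i, ((jsw w i : ℕ) < β) := by
          intro w i
          simp only [hjsw]
          split
          · simp only [hemb, Fin.coe_castLE]; exact (w _).2
          · simp only [hemb, Fin.coe_castLE]; exact hβpos
        have hmemw : ∀ w, EntropyAux3.seqCurve I (jsw w) ∈ F := fun w => memF _ (hjβ w)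
        have hcw : ∀ w, EntropyAux.Codes I (EntropyAux3.seqCurve I (jsw w)) (jsw w) :=
          fun w => EntropyAux3.seqCurve_codes h0 h1 _
        have hpick : ∀ w : Fin n → Fin β, ∃ x ∈ E, ∀ i < n,
            rho (timeOneShift^[i] x) (timeOneShift^[i] (EntropyAux3.seqCurve I (jsw w))) < μ/2 :=
          fun w => hEd.2 _ (hmemw w)
        choose xw hxwE hxwd using hpick
        have hval : ∀ (w : Fin n → Fin β) (k : Fin n), jsw w ((0:ℤ) + ((k:ℕ) : ℤ)) = emb (w k) := by
          intro w k
          have hcond : (0:ℤ) ≤ (0:ℤ) + ((k:ℕ) : ℤ) ∧ (0:ℤ) + ((k:ℕ) : ℤ) < n := by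
            constructor
            · positivity
            · have := k.isLt; omega
          simp only [hjsw, dif_pos hcond]
          congr 1
          apply Fin.ext
          simp
        have hinj : Function.Injective xw := by
          intro w w' hww
          by_contra hne
          obtain ⟨k, hk⟩ : ∃ k, w k ≠ w' k := Function.ne_iff.mp hne
          obtain ⟨jsx, hxβ, hx⟩ := codesF (xw w) (hEd.1 (hxwE w))
          have d1 := hxwd w (k : ℕ) k.isLt
          have d2 := hxwd w' (k : ℕ) k.isLt
          rw [← hww] at d2
          have cγ := (hcw w).shift (k : ℕ)
          have cγ' := (hcw w').shift (k : ℕ)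
          have cx := hx.shift (k : ℕ)
          have tri := EntropyAux2.rho_triangle hcont hC cγ cx cγ'
          rw [EntropyAux2.rho_comm] at d1
          have low := EntropyAux2.rho_lower hcont hC cγ cγ'
          have hne' : jsw w ((0:ℤ) + ((k:ℕ) : ℤ)) ≠ jsw w' ((0:ℤ) + ((k:ℕ) : ℤ)) := by
            rw [hval w k, hval w' k]
            intro h
            exact hk (Fin.castLE_injective _ h)
          rw [hsep _ _ hne'] at low
          linarith
        calc β ^ n = Fintype.card (Fin n → Fin β) := by simp [Fintype.card_fun]
        _ ≤ E.card := by
            rw [← Fintype.card_coe E]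
            exact Fintype.card_le_of_injective (fun w => (⟨xw w, hxwE w⟩ : {x // x ∈ E}))
              (fun a b hab => hinj (congrArg Subtype.val hab))
      exact_mod_cast key
    have hlb : ∀ᶠ n : ℕ in Filter.atTop, (Real.log β : EReal) ≤
        ENNReal.log (coverCard rho timeOneShift F (μ/2) n) / (n : EReal) := by
      filter_upwards [Filter.eventually_ge_atTop 1] with n hn
      have hn0 : ((n:ℕ) : ℝ) ≠ 0 := by positivity
      have h1' : ((β : ENNReal)) ^ n
          ≤ ((coverCard rho timeOneShift F (μ/2) n : ℕ∞) : ENNReal) := by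
        have := hcard n
        exact_mod_cast this
      have hlg : ((((n:ℕ) : ℝ) * Real.log β : ℝ) : EReal)
          ≤ ENNReal.log (coverCard rho timeOneShift F (μ/2) n) := by
        calc ((((n:ℕ) : ℝ) * Real.log β : ℝ) : EReal)
            = ENNReal.log ((β : ENNReal) ^ n) := by
              rw [ENNReal.log_pow, ENNReal.log,
                if_neg (by exact_mod_cast Nat.one_le_iff_ne_zero.mp (by omega : 1 ≤ β)),
                if_neg (by simp), EReal.coe_mul]
              norm_cast
        _ ≤ _ := ENNReal.log_monotone h1'
      have hdiv := EReal.div_le_div_right_of_nonneg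
        (c := ((n:ℕ) : EReal)) (by exact_mod_cast Nat.zero_le n) hlg
      rw [show ((n:ℕ) : EReal) = (((n:ℕ) : ℝ) : EReal) by norm_cast, ← EReal.coe_div,
        mul_div_cancel_left₀ _ hn0] at hdiv
      rw [show ((n:ℕ) : EReal) = (((n:ℕ) : ℝ) : EReal) by norm_cast]
      exact hdiv
    exact Filter.le_limsup_of_frequently_le hlb.frequently

  apply le_antisymm
  · exact iSup₂_le fun ε hε => upper ε hε
  · exact le_iSup₂_of_le (μ/2) (by linarith) lower
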